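/- Let q be a real number with q > 1, let ε₂ ∈ {+1, −1}, and let m be a positive half-odd-integer (m ∈ {1/2, 3/2, 5/2, …}). Define [a]₊ := (q^a + q^{−a})/(q − q⁻¹) (real powers of q). Let M be the linear endomorphism of ℂ² (standard basis e₁, e₂) given by M e₁ = ε₂ q [m]₊ e₁ − q^{1/2} e₂ and M e₂ = ε₂ q⁻¹ [m]₊ e₂ + q^{−1/2} e₁. Then the vectors v₊ := −ε₂ q^{−1/2+m} e₁ + e₂ and v₋ := −ε₂ q^{−1/2−m} e₁ + e₂ form a basis of ℂ² and satisfy M v₊ = ε₂ [m+1]₊ v₊ and M v₋ = ε₂ [m−1]₊ v₋. Consequently the tensor product of the vector representation of U′_q(so_2) with the nonclassical type representation T_{ε₂,m} decomposes as T_{ε₂,m+1} ⊕ T_{ε₂,m−1} for m ≥ 3/2, and as T_{ε₂,3/2} ⊕ T_{ε₂,1/2} for m = 1/2 (since [−1/2]₊ = [1/2]₊). -/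

import Mathlib

/-- The standard basis vector `e_k` of `ℂ²`. -/
noncomputable def e2 (k : Fin 2) : Fin 2 → ℂ := Pi.single k 1

/-- The `q`-number `[a]₊ = (q^a + q^{-a})/(q - q⁻¹)` (real powers of `q`). -/
noncomputable def qnp (q a : ℝ) : ℝ := (q ^ a + q ^ (-a)) / (q - q⁻¹)

set_option maxHeartbeats 1600000

/-- **Decomposition of the vector ⊗ nonclassical-type representation of `U'_q(so_2)`.**
For real `q > 1`, `ε₂ = ±1` and a positive half-odd-integer `m = μ/2` (`μ` odd), let `M` be
the tensor-product action `T⊗(I_{21})` on `ℂ²`: `M e₁ = ε₂ q [m]₊ e₁ - q^{1/2} e₂`,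
`M e₂ = ε₂ q⁻¹ [m]₊ e₂ + q^{-1/2} e₁`.  Then `v₊ = -ε₂ q^{-1/2+m} e₁ + e₂` and
`v₋ = -ε₂ q^{-1/2-m} e₁ + e₂` form a basis of `ℂ²` and satisfy `M v₊ = ε₂ [m+1]₊ v₊`,
`M v₋ = ε₂ [m-1]₊ v₋`; hence `T_𝟏 ⊗ T_{ε₂,m} = T_{ε₂,m+1} ⊕ T_{ε₂,m-1}` for `m ≥ 3/2` and
`T_𝟏 ⊗ T_{ε₂,1/2} = T_{ε₂,3/2} ⊕ T_{ε₂,1/2}` (since `[-1/2]₊ = [1/2]₊`). -/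
theorem stmt_12 (q : ℝ) (hq : 1 < q) (ε₂ : ℝ) (hε₂ : ε₂ = 1 ∨ ε₂ = -1)
    (μ : ℕ) (hμ : Odd μ)
    (M : Module.End ℂ (Fin 2 → ℂ))
    (hM1 : M (e2 0) = ((ε₂ * q * qnp q ((μ : ℝ) / 2) : ℝ) : ℂ) • e2 0
      + (-((q ^ (1 / 2 : ℝ) : ℝ) : ℂ)) • e2 1)
    (hM2 : M (e2 1) = ((ε₂ * q⁻¹ * qnp q ((μ : ℝ) / 2) : ℝ) : ℂ) • e2 1
      + ((q ^ (-(1 / 2) : ℝ) : ℝ) : ℂ) • e2 0) :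
    LinearIndependent ℂ
      ![((-ε₂ * q ^ (-(1 / 2 : ℝ) + (μ : ℝ) / 2) : ℝ) : ℂ) • e2 0 + e2 1,
        ((-ε₂ * q ^ (-(1 / 2 : ℝ) - (μ : ℝ) / 2) : ℝ) : ℂ) • e2 0 + e2 1] ∧
    Submodule.span ℂ
      {((-ε₂ * q ^ (-(1 / 2 : ℝ) + (μ : ℝ) / 2) : ℝ) : ℂ) • e2 0 + e2 1,
       ((-ε₂ * q ^ (-(1 / 2 : ℝ) - (μ : ℝ) / 2) : ℝ) : ℂ) • e2 0 + e2 1}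
      = (⊤ : Submodule ℂ (Fin 2 → ℂ)) ∧
    M (((-ε₂ * q ^ (-(1 / 2 : ℝ) + (μ : ℝ) / 2) : ℝ) : ℂ) • e2 0 + e2 1)
      = ((ε₂ * qnp q ((μ : ℝ) / 2 + 1) : ℝ) : ℂ) •
          (((-ε₂ * q ^ (-(1 / 2 : ℝ) + (μ : ℝ) / 2) : ℝ) : ℂ) • e2 0 + e2 1) ∧
    M (((-ε₂ * q ^ (-(1 / 2 : ℝ) - (μ : ℝ) / 2) : ℝ) : ℂ) • e2 0 + e2 1)
      = ((ε₂ * qnp q ((μ : ℝ) / 2 - 1) : ℝ) : ℂ) •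
          (((-ε₂ * q ^ (-(1 / 2 : ℝ) - (μ : ℝ) / 2) : ℝ) : ℂ) • e2 0 + e2 1) := by
  have hq0 : (0 : ℝ) < q := lt_trans one_pos hq
  have hqne : q ≠ 0 := ne_of_gt hq0
  have hqq : q - q⁻¹ ≠ 0 := by
    have h1 : q⁻¹ < 1 := inv_lt_one_of_one_lt₀ hq
    exact sub_ne_zero.mpr (ne_of_gt (lt_trans h1 hq))
  set m : ℝ := (μ : ℝ) / 2 with hm
  have hm0 : 0 < m := by
    have h1 : 0 < μ := hμ.pos
    have h2 : (0 : ℝ) < (μ : ℝ) := by exact_mod_cast h1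
    rw [hm]; linarith
  set s : ℝ := q ^ (1 / 2 : ℝ) with hs
  set t : ℝ := q ^ m with ht
  have hs0 : 0 < s := Real.rpow_pos_of_pos hq0 _
  have ht0 : 0 < t := Real.rpow_pos_of_pos hq0 _
  have hsq : s * s = q := by
    rw [hs, ← Real.rpow_add hq0]; norm_num
  have ht1 : 1 < t := (Real.one_lt_rpow_iff_of_pos hq0).2 (Or.inl ⟨hq, hm0⟩)
  have hqq' : s * s - (s * s)⁻¹ ≠ 0 := by rw [hsq]; exact hqq
  -- rpow rewrites
  have rC : q ^ (-(1 / 2) : ℝ) = s⁻¹ := by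
    rw [Real.rpow_neg hq0.le, hs]
  have rA : q ^ (-(1 / 2 : ℝ) + m) = s⁻¹ * t := by
    rw [Real.rpow_add hq0, rC, ht]
  have rB : q ^ (-(1 / 2 : ℝ) - m) = s⁻¹ * t⁻¹ := by
    rw [Real.rpow_sub hq0, rC, ← ht, div_eq_mul_inv]
  have rm : q ^ (-m) = t⁻¹ := by rw [Real.rpow_neg hq0.le, ht]
  have rD : q ^ (m + 1) = t * q := by rw [Real.rpow_add hq0, Real.rpow_one, ht]
  have rE : q ^ (-(m + 1)) = t⁻¹ * q⁻¹ := by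
    rw [neg_add, Real.rpow_add hq0, Real.rpow_neg hq0.le, Real.rpow_neg hq0.le,
      Real.rpow_one, ht]
  have rF : q ^ (m - 1) = t * q⁻¹ := by
    rw [Real.rpow_sub hq0, Real.rpow_one, ht, div_eq_mul_inv]
  have rG : q ^ (-(m - 1)) = t⁻¹ * q := by
    rw [neg_sub, Real.rpow_sub hq0, Real.rpow_one, ← ht]
    field_simp
  rw [rC] at hM2
  have hq21 : q * q - 1 ≠ 0 := ne_of_gt (by nlinarith)
  have qnp_eq : ∀ a : ℝ, qnp q a = (q ^ a + q ^ (-a)) * q / (q * q - 1) := by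
    intro a
    rw [qnp, div_eq_div_iff hqq hq21]
    field_simp
  have hεne : ε₂ ≠ 0 := by rcases hε₂ with h | h <;> rw [h] <;> norm_num
  rw [rA, rB]
  set c1 : ℂ := ((-ε₂ * (s⁻¹ * t) : ℝ) : ℂ) with hc1
  set c2 : ℂ := ((-ε₂ * (s⁻¹ * t⁻¹) : ℝ) : ℂ) with hc2
  have hcne : c1 ≠ c2 := by
    rw [hc1, hc2, Ne, Complex.ofReal_inj]
    intro h
    have h2 : s⁻¹ * t = s⁻¹ * t⁻¹ := mul_left_cancel₀ (neg_ne_zero.mpr hεne) h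
    have h3 : t = t⁻¹ := mul_left_cancel₀ (inv_ne_zero hs0.ne') h2
    have h4 : t * t = 1 := by nth_rewrite 1 [h3]; exact inv_mul_cancel₀ ht0.ne'
    nlinarith
  refine ⟨?_, ?_, ?_, ?_⟩
  · rw [linearIndependent_fin2]
    constructor
    · simp only [Matrix.cons_val_one, Matrix.head_cons]
      intro h
      have := congrFun h 1
      simp [e2, Pi.single_apply] at this
    · intro a h
      simp only [Matrix.cons_val_one, Matrix.head_cons, Matrix.cons_val_zero] at h
      have h1 := congrFun h 1
      have h0 := congrFun h 0
      simp [e2, Pi.single_apply] at h1 h0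
      rw [h1, one_mul] at h0
      exact hcne h0.symm
  · set S := Submodule.span ℂ ({c1 • e2 0 + e2 1, c2 • e2 0 + e2 1} : Set (Fin 2 → ℂ)) with hS
    have hv1 : c1 • e2 0 + e2 1 ∈ S := Submodule.subset_span (by left; rfl)
    have hv2 : c2 • e2 0 + e2 1 ∈ S := Submodule.subset_span (by right; rfl)
    have hdiff : (c1 • e2 0 + e2 1) - (c2 • e2 0 + e2 1) = (c1 - c2) • e2 0 := by
      rw [sub_smul]; abel
    have he0 : e2 0 ∈ S := by
      have h := S.smul_mem (c1 - c2)⁻¹ (S.sub_mem hv1 hv2)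
      rwa [hdiff, smul_smul, inv_mul_cancel₀ (sub_ne_zero.mpr hcne), one_smul] at h
    have he1 : e2 1 ∈ S := by
      have h := S.sub_mem hv1 (S.smul_mem c1 he0)
      rwa [add_sub_cancel_left] at h
    rw [eq_top_iff]
    rintro x -
    have hx : x = x 0 • e2 0 + x 1 • e2 1 := by
      funext i; fin_cases i <;> simp [e2, Pi.single_apply]
    rw [hx]
    exact S.add_mem (S.smul_mem _ he0) (S.smul_mem _ he1)
  · rw [map_add, map_smul, hM1, hM2]
    funext i; fin_cases i <;>
    · simp only [hc1, Pi.add_apply, Pi.smul_apply, smul_eq_mul, e2, Pi.single_apply,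
        neg_mul, neg_smul]
      norm_num
      norm_cast
      simp only [qnp_eq, rD, rE, rm, ← ht]
      rcases hε₂ with h | h <;> rw [h] <;>
        field_simp [hs0.ne', ht0.ne', hq21, (by rw [sq]; exact hq21 : q ^ 2 - 1 ≠ 0)] <;> ring
  · rw [map_add, map_smul, hM1, hM2]
    funext i; fin_cases i <;>
    · simp only [hc2, Pi.add_apply, Pi.smul_apply, smul_eq_mul, e2, Pi.single_apply,
        neg_mul, neg_smul]
      norm_num
      norm_cast
      simp only [qnp_eq, rF, rG, rm, ← ht]
      rcases hε₂ with h | h <;> rw [h] <;>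
        field_simp [hs0.ne', ht0.ne', hq21, (by rw [sq]; exact hq21 : q ^ 2 - 1 ≠ 0)] <;> ring
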